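/- The bipartite incidence graph G_q of PG(2,q) is two-side k-pairable whenever k ≤ (q+4)/5: for any 2k points u_1, v_1, ..., u_k, v_k of PG(2,q), the pairing graph on these 2k vertices with edges (u_i, v_i) is a vertex-minor of G_q, and symmetrically for any 2k lines. -/

import Mathlib

variable {V : Type*}

/-- Local complementation at `v`: toggle edges within the neighborhood of `v`. -/
def localComp (G : SimpleGraph V) (v : V) : SimpleGraph V where
  Adj x y := x ≠ y ∧ Xor' (G.Adj x y) (G.Adj v x ∧ G.Adj v y)
  symm := by
    constructor
    rintro x y ⟨hxy, h⟩
    refine ⟨hxy.symm, ?_⟩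
    have := G.adj_comm x y
    unfold Xor' at *
    unfold Xor at *
    tauto
  loopless := by constructor; rintro x ⟨h, -⟩; exact h rfl

/-- Deletion of vertex `v`. -/
def deleteVert (G : SimpleGraph V) (v : V) : SimpleGraph V where
  Adj x y := G.Adj x y ∧ x ≠ v ∧ y ≠ v
  symm := by constructor; rintro x y ⟨h, hx, hy⟩; exact ⟨h.symm, hy, hx⟩
  loopless := by constructor; rintro x ⟨h, -⟩; exact G.loopless.irrefl x h

/-- One step: either local complementation at a vertex of the current vertex set,
or deletion of a vertex of the current vertex set. -/
inductive VMStep : SimpleGraph V × Set V → SimpleGraph V × Set V → Prop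
  | lc (G : SimpleGraph V) (S : Set V) (v : V) (hv : v ∈ S) :
      VMStep (G, S) (localComp G v, S)
  | del (G : SimpleGraph V) (S : Set V) (v : V) (hv : v ∈ S) :
      VMStep (G, S) (deleteVert G v, S \ {v})

/-- `H` (a graph on vertex set `KH`) is a vertex-minor of `G` (a graph on vertex set `KG`). -/
def IsVertexMinor (H : SimpleGraph V) (KH : Set V) (G : SimpleGraph V) (KG : Set V) : Prop :=
  Relation.ReflTransGen VMStep (G, KG) (H, KH)

/-- The pairing graph with edges `(u i, v i)`. -/
def pairingGraph {k : ℕ} (u v : Fin k → V) : SimpleGraph V where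
  Adj x y := x ≠ y ∧ ∃ i, (x = u i ∧ y = v i) ∨ (x = v i ∧ y = u i)
  symm := by constructor; rintro x y ⟨h, i, hi⟩; exact ⟨h.symm, i, by tauto⟩
  loopless := by constructor; rintro x ⟨h, -⟩; exact h rfl

/-- Points of PG(2,q): 1-dimensional subspaces of F^3. -/
def ProjPoint (F : Type*) [Field F] : Type _ :=
  {p : Submodule F (Fin 3 → F) // Module.finrank F p = 1}

/-- Lines of PG(2,q): 2-dimensional subspaces of F^3. -/
def ProjLine (F : Type*) [Field F] : Type _ :=
  {l : Submodule F (Fin 3 → F) // Module.finrank F l = 2}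

variable (F : Type*) [Field F]

/-- Bipartite incidence graph of PG(2,q). -/
def incGraph : SimpleGraph (ProjPoint F ⊕ ProjLine F) where
  Adj x y :=
    (∃ p l, x = Sum.inl p ∧ y = Sum.inr l ∧ p.val ≤ l.val) ∨
    (∃ p l, x = Sum.inr l ∧ y = Sum.inl p ∧ p.val ≤ l.val)
  symm := by
    constructor
    rintro x y (⟨p, l, rfl, rfl, h⟩ | ⟨p, l, rfl, rfl, h⟩)
    · exact Or.inr ⟨p, l, rfl, rfl, h⟩
    · exact Or.inl ⟨p, l, rfl, rfl, h⟩
  loopless := by constructor; rintro x (⟨p, l, h1, h2, -⟩ | ⟨p, l, h1, h2, -⟩) <;> simp_all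

/-- Orthogonality graph on points of PG(2,q). -/
def orthGraph : SimpleGraph (ProjPoint F) where
  Adj a b := a ≠ b ∧ ∀ x ∈ a.val, ∀ y ∈ b.val, dotProduct x y = 0
  symm := by
    constructor
    rintro a b ⟨hne, h⟩
    exact ⟨hne.symm, fun x hx y hy => by rw [dotProduct_comm]; exact h y hy x hx⟩
  loopless := by constructor; rintro a ⟨h, -⟩; exact h rfl
namespace VMAux

open Relation

variable {V : Type*}

def pr (x y p q : V) : Prop := (x = p ∧ y = q) ∨ (x = q ∧ y = p)

def shapePairs : ℕ → List (Fin 5 × Fin 5)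
  | 0 => [(0,1),(1,2),(2,3),(3,4)]
  | 1 => [(0,1),(1,2),(2,3),(3,4),(0,2)]
  | 2 => [(0,2),(2,3),(3,4)]
  | 3 => [(0,2),(2,3),(3,4),(0,3)]
  | 4 => [(0,3),(3,4)]
  | 5 => [(0,3),(3,4),(0,4)]
  | _ => [(0,4)]

lemma shapePairs_ge6 (n : ℕ) : shapePairs (n+6) = [(0,4)] := rfl

lemma shapePairs_ne : ∀ (n : ℕ), ∀ p ∈ shapePairs n, p.1 ≠ p.2 := by
  intro n
  rcases n with _|_|_|_|_|_|n
  · decide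
  · decide
  · decide
  · decide
  · decide
  · decide
  · rw [shapePairs_ge6]; decide

def bigGraph {k : ℕ} (F : Fin 5 → Fin k → V) (d : Fin k → ℕ) : SimpleGraph V where
  Adj x y := x ≠ y ∧ ∃ i, ∃ p ∈ shapePairs (d i), pr x y (F p.1 i) (F p.2 i)
  symm := by
    constructor
    rintro x y ⟨h, i, p, hp, hpr⟩
    exact ⟨h.symm, i, p, hp, by unfold pr at *; tauto⟩
  loopless := by constructor; exact fun x ⟨h, _⟩ => h rfl

variable {k : ℕ} {F : Fin 5 → Fin k → V}

section withInj

variable (hne : ∀ r s i j, F r i = F s j → r = s ∧ i = j)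
include hne

lemma adj_iff (d : Fin k → ℕ) (r : Fin 5) (t : Fin k) (z : V) :
    (bigGraph F d).Adj (F r t) z ↔
      ∃ s, ((r,s) ∈ shapePairs (d t) ∨ (s,r) ∈ shapePairs (d t)) ∧ z = F s t := by
  constructor
  · rintro ⟨hxy, i, p, hp, (⟨h1, h2⟩ | ⟨h1, h2⟩)⟩
    · obtain ⟨rfl, rfl⟩ := hne _ _ _ _ h1
      exact ⟨p.2, Or.inl hp, h2⟩
    · obtain ⟨rfl, rfl⟩ := hne _ _ _ _ h1
      exact ⟨p.1, Or.inr hp, h2⟩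
  · rintro ⟨s, hs | hs, rfl⟩
    · have hrs : r ≠ s := shapePairs_ne _ _ hs
      refine ⟨fun h => hrs (hne _ _ _ _ h).1, t, (r,s), hs, Or.inl ⟨rfl, rfl⟩⟩
    · have hrs : s ≠ r := shapePairs_ne _ _ hs
      refine ⟨fun h => hrs.symm (hne _ _ _ _ h).1, t, (s,r), hs, Or.inr ⟨rfl, rfl⟩⟩

lemma localComp_bigGraph (d d' : Fin k → ℕ) (t : Fin k) (m n1 n2 : Fin 5)
    (hd : ∀ i, i ≠ t → d' i = d i)
    (hnb : ∀ s : Fin 5, ((m,s) ∈ shapePairs (d t) ∨ (s,m) ∈ shapePairs (d t)) ↔ (s = n1 ∨ s = n2))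
    (hn12 : n1 ≠ n2)
    (hnew : ∀ p : Fin 5 × Fin 5, p ∈ shapePairs (d' t) ↔ (p ∈ shapePairs (d t) ∨ p = (n1,n2)))
    (hold : (n1, n2) ∉ shapePairs (d t) ∧ (n2,n1) ∉ shapePairs (d t)) :
    localComp (bigGraph F d) (F m t) = bigGraph F d' := by
  have hmono : ∀ x y, (bigGraph F d).Adj x y → (bigGraph F d').Adj x y := by
    rintro x y ⟨hxy, i, p, hp, hpr⟩
    by_cases hit : i = t
    · subst hit
      exact ⟨hxy, i, p, (hnew p).2 (Or.inl hp), hpr⟩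
    · exact ⟨hxy, i, p, by rw [hd i hit]; exact hp, hpr⟩
  have hnbr : ∀ z, (bigGraph F d).Adj (F m t) z ↔ (z = F n1 t ∨ z = F n2 t) := by
    intro z
    rw [adj_iff hne]
    constructor
    · rintro ⟨s, hs, rfl⟩
      rcases (hnb s).1 hs with rfl | rfl
      · exact Or.inl rfl
      · exact Or.inr rfl
    · rintro (rfl | rfl)
      · exact ⟨n1, (hnb n1).2 (Or.inl rfl), rfl⟩
      · exact ⟨n2, (hnb n2).2 (Or.inr rfl), rfl⟩
  have hnoold : ¬ (bigGraph F d).Adj (F n1 t) (F n2 t) := by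
    rw [adj_iff hne]
    rintro ⟨s, hs | hs, hz⟩
    · obtain ⟨rfl, -⟩ := hne _ _ _ _ hz
      exact hold.1 hs
    · obtain ⟨rfl, -⟩ := hne _ _ _ _ hz
      exact hold.2 hs
  ext x y
  constructor
  · rintro ⟨hxy, h⟩
    rcases h with ⟨hadj, -⟩ | ⟨⟨hx, hy⟩, hnadj⟩
    · exact hmono _ _ hadj
    · rw [hnbr] at hx hy
      refine ⟨hxy, t, (n1, n2), (hnew _).2 (Or.inr rfl), ?_⟩
      rcases hx with rfl | rfl <;> rcases hy with rfl | rfl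
      · exact absurd rfl hxy
      · exact Or.inl ⟨rfl, rfl⟩
      · exact Or.inr ⟨rfl, rfl⟩
      · exact absurd rfl hxy
  · rintro ⟨hxy, i, p, hp, hpr⟩
    refine ⟨hxy, ?_⟩
    have key : ∀ (e1 e2 : Fin 5), (e1,e2) ∈ shapePairs (d t) →
        (F e1 t = F n1 t ∨ F e1 t = F n2 t) → (F e2 t = F n1 t ∨ F e2 t = F n2 t) → False := by
      intro e1 e2 hmem h1 h2
      have hne12 : e1 ≠ e2 := shapePairs_ne _ _ hmem
      rcases h1 with h1 | h1 <;> rcases h2 with h2 | h2 <;>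
        obtain ⟨rfl, -⟩ := hne _ _ _ _ h1 <;> obtain ⟨rfl, -⟩ := hne _ _ _ _ h2
      · exact hne12 rfl
      · exact hold.1 hmem
      · exact hold.2 hmem
      · exact hne12 rfl
    by_cases hit : i = t
    · subst hit
      rcases (hnew p).1 hp with hp' | rfl
      · left
        refine ⟨⟨hxy, i, p, hp', hpr⟩, ?_⟩
        rintro ⟨hx, hy⟩
        rw [hnbr] at hx hy
        rcases hpr with ⟨rfl, rfl⟩ | ⟨rfl, rfl⟩
        · exact key p.1 p.2 hp' hx hy
        · exact key p.1 p.2 hp' hy hx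
      · right
        constructor
        · rcases hpr with ⟨rfl, rfl⟩ | ⟨rfl, rfl⟩
          · exact ⟨(hnbr _).2 (Or.inl rfl), (hnbr _).2 (Or.inr rfl)⟩
          · exact ⟨(hnbr _).2 (Or.inr rfl), (hnbr _).2 (Or.inl rfl)⟩
        · intro hadj
          rcases hpr with ⟨rfl, rfl⟩ | ⟨rfl, rfl⟩
          · exact hnoold hadj
          · exact hnoold hadj.symm
    · rw [hd i hit] at hp
      left
      refine ⟨⟨hxy, i, p, hp, hpr⟩, ?_⟩
      rintro ⟨hx, hy⟩
      rw [hnbr] at hx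
      rcases hpr with ⟨rfl, rfl⟩ | ⟨rfl, rfl⟩
      · rcases hx with hx | hx <;> exact hit (hne _ _ _ _ hx).2
      · rcases hx with hx | hx <;> exact hit (hne _ _ _ _ hx).2

lemma deleteVert_bigGraph (d d' : Fin k → ℕ) (t : Fin k) (m : Fin 5)
    (hd : ∀ i, i ≠ t → d' i = d i)
    (hnew : ∀ p : Fin 5 × Fin 5, p ∈ shapePairs (d' t) ↔
      (p ∈ shapePairs (d t) ∧ p.1 ≠ m ∧ p.2 ≠ m)) :
    deleteVert (bigGraph F d) (F m t) = bigGraph F d' := by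
  ext x y
  constructor
  · rintro ⟨⟨hxy, i, p, hp, hpr⟩, hx, hy⟩
    refine ⟨hxy, i, p, ?_, hpr⟩
    by_cases hit : i = t
    · subst hit
      refine (hnew p).2 ⟨hp, ?_, ?_⟩
      · rintro rfl
        rcases hpr with ⟨rfl, -⟩ | ⟨-, rfl⟩
        · exact hx rfl
        · exact hy rfl
      · rintro rfl
        rcases hpr with ⟨-, rfl⟩ | ⟨rfl, -⟩
        · exact hy rfl
        · exact hx rfl
    · rw [hd i hit]; exact hp
  · rintro ⟨hxy, i, p, hp, hpr⟩
    by_cases hit : i = t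
    · subst hit
      obtain ⟨hp', h1, h2⟩ := (hnew p).1 hp
      refine ⟨⟨hxy, i, p, hp', hpr⟩, ?_, ?_⟩ <;>
        · rcases hpr with ⟨rfl, rfl⟩ | ⟨rfl, rfl⟩ <;>
            intro h <;>
            first
            | exact h1 (hne _ _ _ _ h).1
            | exact h2 (hne _ _ _ _ h).1
    · rw [hd i hit] at hp
      refine ⟨⟨hxy, i, p, hp, hpr⟩, ?_, ?_⟩ <;>
        · rcases hpr with ⟨rfl, rfl⟩ | ⟨rfl, rfl⟩ <;>
            intro h <;>
            exact hit (hne _ _ _ _ h).2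

end withInj

end VMAux
set_option maxHeartbeats 1000000
namespace VMAux

open Relation

variable {V : Type*} {k : ℕ}

def dts (t s : ℕ) : Fin k → ℕ := fun i => if i.1 < t then 6 else if i.1 = t then s else 0

lemma dts_self (t s : ℕ) (ht : t < k) : dts t s (⟨t, ht⟩ : Fin k) = s := by
  simp [dts]

lemma dts_ne (t s s' : ℕ) (i : Fin k) (h : i.1 ≠ t) : dts t s i = dts t s' i := by
  simp only [dts]
  split_ifs <;> omega

lemma dts_six (t : ℕ) : (dts t 6 : Fin k → ℕ) = dts (t+1) 0 := by
  funext i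
  simp only [dts]
  split_ifs <;> omega

def condFn (d : Fin k → ℕ) (r : Fin 5) (i : Fin k) : Prop :=
  r = 0 ∨ r = 4 ∨ (r = 1 ∧ d i < 2) ∨ (r = 2 ∧ d i < 4) ∨ (r = 3 ∧ d i < 6)

def keep (F : Fin 5 → Fin k → V) (d : Fin k → ℕ) : Set V :=
  {x | ∃ r i, x = F r i ∧ condFn d r i}

section withInj

variable {F : Fin 5 → Fin k → V}
variable (hne : ∀ r s i j, F r i = F s j → r = s ∧ i = j)
include hne

omit hne in
lemma keep_congr (d d' : Fin k → ℕ) (h : ∀ r i, condFn d r i ↔ condFn d' r i) :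
    keep F d = keep F d' := by
  ext x
  constructor <;> rintro ⟨r, i, rfl, hc⟩
  · exact ⟨r, i, rfl, (h r i).1 hc⟩
  · exact ⟨r, i, rfl, (h r i).2 hc⟩

lemma keep_del (d d' : Fin k → ℕ) (r : Fin 5) (T : Fin k)
    (h : ∀ r' i', condFn d' r' i' ↔ (condFn d r' i' ∧ ¬(r' = r ∧ i' = T))) :
    keep F d \ {F r T} = keep F d' := by
  ext x
  constructor
  · rintro ⟨⟨r', i', rfl, hc⟩, hx⟩
    refine ⟨r', i', rfl, (h r' i').2 ⟨hc, ?_⟩⟩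
    rintro ⟨rfl, rfl⟩
    exact hx rfl
  · rintro ⟨r', i', rfl, hc⟩
    obtain ⟨hc', hne'⟩ := (h r' i').1 hc
    refine ⟨⟨r', i', rfl, hc'⟩, ?_⟩
    intro hx
    obtain ⟨rfl, rfl⟩ := hne _ _ _ _ hx
    exact hne' ⟨rfl, rfl⟩

lemma pair_step (t : ℕ) (ht : t < k) :
    ReflTransGen VMStep (bigGraph F (dts t 0), keep F (dts t 0))
      (bigGraph F (dts (t+1) 0), keep F (dts (t+1) 0)) := by
  have dtsT : ∀ s : ℕ, dts t s (⟨t, ht⟩ : Fin k) = s := fun s => dts_self t s ht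
  have hdne : ∀ (s s' : ℕ) (i : Fin k), i ≠ ⟨t, ht⟩ → dts t s i = dts t s' i :=
    fun s s' i hi => dts_ne t s s' i (fun h => hi (Fin.ext h))
  have memk : ∀ (s : ℕ) (r : Fin 5), condFn (dts t s) r (⟨t, ht⟩ : Fin k) →
      F r (⟨t, ht⟩ : Fin k) ∈ keep F (dts t s) := fun s r hc => ⟨r, ⟨t, ht⟩, rfl, hc⟩
  have e1 : localComp (bigGraph F (dts t 0)) (F 1 ⟨t, ht⟩) = bigGraph F (dts t 1) := by
    refine localComp_bigGraph hne _ _ ⟨t, ht⟩ 1 0 2 (hdne 1 0) ?_ (by decide) ?_ ?_ <;>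
      rw [dtsT] <;> first | (rw [dtsT]; decide) | decide
  have e2 : deleteVert (bigGraph F (dts t 1)) (F 1 ⟨t, ht⟩) = bigGraph F (dts t 2) := by
    refine deleteVert_bigGraph hne _ _ ⟨t, ht⟩ 1 (hdne 2 1) ?_
    rw [dtsT, dtsT]; decide
  have e3 : localComp (bigGraph F (dts t 2)) (F 2 ⟨t, ht⟩) = bigGraph F (dts t 3) := by
    refine localComp_bigGraph hne _ _ ⟨t, ht⟩ 2 0 3 (hdne 3 2) ?_ (by decide) ?_ ?_ <;>
      rw [dtsT] <;> first | (rw [dtsT]; decide) | decide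
  have e4 : deleteVert (bigGraph F (dts t 3)) (F 2 ⟨t, ht⟩) = bigGraph F (dts t 4) := by
    refine deleteVert_bigGraph hne _ _ ⟨t, ht⟩ 2 (hdne 4 3) ?_
    rw [dtsT, dtsT]; decide
  have e5 : localComp (bigGraph F (dts t 4)) (F 3 ⟨t, ht⟩) = bigGraph F (dts t 5) := by
    refine localComp_bigGraph hne _ _ ⟨t, ht⟩ 3 0 4 (hdne 5 4) ?_ (by decide) ?_ ?_ <;>
      rw [dtsT] <;> first | (rw [dtsT]; decide) | decide
  have e6 : deleteVert (bigGraph F (dts t 5)) (F 3 ⟨t, ht⟩) = bigGraph F (dts t 6) := by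
    refine deleteVert_bigGraph hne _ _ ⟨t, ht⟩ 3 (hdne 6 5) ?_
    rw [dtsT, dtsT]; decide
  have condT : ∀ (s : ℕ) (r : Fin 5), condFn (dts t s) r (⟨t, ht⟩ : Fin k) ↔
      (r = 0 ∨ r = 4 ∨ (r = 1 ∧ s < 2) ∨ (r = 2 ∧ s < 4) ∨ (r = 3 ∧ s < 6)) := by
    intro s r
    simp [condFn, dtsT s]
  have condNe : ∀ (s s' : ℕ) (r : Fin 5) (i : Fin k), i ≠ ⟨t, ht⟩ →
      (condFn (dts t s) r i ↔ condFn (dts t s') r i) := by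
    intro s s' r i hi
    simp [condFn, hdne s s' i hi]
  have kcong : ∀ s s' : ℕ, (s < 2 ↔ s' < 2) → (s < 4 ↔ s' < 4) → (s < 6 ↔ s' < 6) →
      keep F (dts t s) = keep F (dts t s') := by
    intro s s' h2 h4 h6
    refine keep_congr (F := F) _ _ ?_
    intro r i
    by_cases hi : i = ⟨t, ht⟩
    · subst hi
      rw [condT, condT]
      tauto
    · exact condNe s s' r i hi
  have k01 : keep F (dts t 0) = keep F (dts t 1) := kcong 0 1 (by omega) (by omega) (by omega)
  have k23 : keep F (dts t 2) = keep F (dts t 3) := kcong 2 3 (by omega) (by omega) (by omega)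
  have k45 : keep F (dts t 4) = keep F (dts t 5) := kcong 4 5 (by omega) (by omega) (by omega)
  have kd : ∀ (s s' : ℕ) (r : Fin 5), (∀ r' : Fin 5,
        (condFn (dts t s') r' (⟨t, ht⟩ : Fin k) ↔
          (condFn (dts t s) r' (⟨t, ht⟩ : Fin k) ∧ r' ≠ r))) →
      keep F (dts t s) \ {F r ⟨t, ht⟩} = keep F (dts t s') := by
    intro s s' r hS
    refine keep_del hne _ _ r ⟨t, ht⟩ ?_
    intro r' i'
    by_cases hi : i' = ⟨t, ht⟩
    · subst hi
      rw [hS r']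
      constructor
      · rintro ⟨hc, hr⟩; exact ⟨hc, fun h => hr h.1⟩
      · rintro ⟨hc, hr⟩; exact ⟨hc, fun h => hr ⟨h, rfl⟩⟩
    · rw [← condNe s s' r' i' hi]
      constructor
      · exact fun h => ⟨h, fun hh => hi hh.2⟩
      · exact fun h => h.1
  have k12 : keep F (dts t 1) \ {F 1 ⟨t, ht⟩} = keep F (dts t 2) := by
    refine kd 1 2 1 ?_
    intro r'
    rw [condT, condT]
    fin_cases r' <;> simp <;> decide
  have k34 : keep F (dts t 3) \ {F 2 ⟨t, ht⟩} = keep F (dts t 4) := by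
    refine kd 3 4 2 ?_
    intro r'
    rw [condT, condT]
    fin_cases r' <;> simp <;> decide
  have k56 : keep F (dts t 5) \ {F 3 ⟨t, ht⟩} = keep F (dts t 6) := by
    refine kd 5 6 3 ?_
    intro r'
    rw [condT, condT]
    fin_cases r' <;> simp <;> decide
  have m1 : F 1 ⟨t, ht⟩ ∈ keep F (dts t 0) := memk 0 1 ((condT 0 1).2 (by decide))
  have m1' : F 1 ⟨t, ht⟩ ∈ keep F (dts t 1) := memk 1 1 ((condT 1 1).2 (by decide))
  have m2 : F 2 ⟨t, ht⟩ ∈ keep F (dts t 2) := memk 2 2 ((condT 2 2).2 (by decide))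
  have m2' : F 2 ⟨t, ht⟩ ∈ keep F (dts t 3) := memk 3 2 ((condT 3 2).2 (by decide))
  have m3 : F 3 ⟨t, ht⟩ ∈ keep F (dts t 4) := memk 4 3 ((condT 4 3).2 (by decide))
  have m3' : F 3 ⟨t, ht⟩ ∈ keep F (dts t 5) := memk 5 3 ((condT 5 3).2 (by decide))
  have s1 : VMStep (bigGraph F (dts t 0), keep F (dts t 0))
      (bigGraph F (dts t 1), keep F (dts t 1)) := by
    rw [← k01, ← e1]
    exact VMStep.lc _ _ _ m1
  have s2 : VMStep (bigGraph F (dts t 1), keep F (dts t 1))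
      (bigGraph F (dts t 2), keep F (dts t 2)) := by
    rw [← k12, ← e2]
    exact VMStep.del _ _ _ m1'
  have s3 : VMStep (bigGraph F (dts t 2), keep F (dts t 2))
      (bigGraph F (dts t 3), keep F (dts t 3)) := by
    rw [← k23, ← e3]
    exact VMStep.lc _ _ _ m2
  have s4 : VMStep (bigGraph F (dts t 3), keep F (dts t 3))
      (bigGraph F (dts t 4), keep F (dts t 4)) := by
    rw [← k34, ← e4]
    exact VMStep.del _ _ _ m2'
  have s5 : VMStep (bigGraph F (dts t 4), keep F (dts t 4))
      (bigGraph F (dts t 5), keep F (dts t 5)) := by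
    rw [← k45, ← e5]
    exact VMStep.lc _ _ _ m3
  have s6 : VMStep (bigGraph F (dts t 5), keep F (dts t 5))
      (bigGraph F (dts (t+1) 0), keep F (dts (t+1) 0)) := by
    rw [← dts_six, ← k56, ← e6]
    exact VMStep.del _ _ _ m3'
  exact (ReflTransGen.single s1).trans <| (ReflTransGen.single s2).trans <|
    (ReflTransGen.single s3).trans <| (ReflTransGen.single s4).trans <|
    (ReflTransGen.single s5).trans (ReflTransGen.single s6)

lemma chain : ∀ t : ℕ, t ≤ k →
    ReflTransGen VMStep (bigGraph F (dts 0 0), keep F (dts 0 0))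
      (bigGraph F (dts t 0), keep F (dts t 0)) := by
  intro t
  induction t with
  | zero => intro _; exact ReflTransGen.refl
  | succ n ih =>
    intro h
    exact (ih (Nat.le_of_succ_le h)).trans (pair_step hne n h)

end withInj

end VMAux
namespace VMAux

open Relation

variable {V : Type*}

def delSet (G : SimpleGraph V) (D : Set V) : SimpleGraph V where
  Adj x y := G.Adj x y ∧ x ∉ D ∧ y ∉ D
  symm := by constructor; rintro x y ⟨h, hx, hy⟩; exact ⟨h.symm, hy, hx⟩
  loopless := by constructor; rintro x ⟨h, -⟩; exact G.loopless.irrefl x h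

lemma delete_many [DecidableEq V] (D : Finset V) :
    ∀ (G : SimpleGraph V) (S : Set V), ↑D ⊆ S →
    ReflTransGen VMStep (G, S) (delSet G ↑D, S \ ↑D) := by
  induction D using Finset.induction with
  | empty =>
    intro G S _
    have h1 : delSet G ↑(∅ : Finset V) = G := by
      ext x y
      simp [delSet]
    have h2 : S \ ↑(∅ : Finset V) = S := by simp
    rw [h1, h2]
  | @insert a D ha ih =>
    intro G S hsub
    have haS : a ∈ S := hsub (by simp)
    have hstep : VMStep (G, S) (deleteVert G a, S \ {a}) := VMStep.del G S a haS
    have hsub' : ↑D ⊆ S \ {a} := by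
      intro x hx
      refine ⟨hsub (by simp [hx]), ?_⟩
      simp only [Set.mem_singleton_iff]
      rintro rfl
      exact ha hx
    have ih' := ih (deleteVert G a) (S \ {a}) hsub'
    have hg : delSet (deleteVert G a) ↑D = delSet G ↑(insert a D) := by
      ext x y
      simp only [delSet, deleteVert, Finset.coe_insert, Set.mem_insert_iff,
        Finset.mem_coe, Set.mem_setOf_eq]
      tauto
    have hs : (S \ {a}) \ ↑D = S \ ↑(insert a D) := by
      ext x
      simp only [Set.mem_diff, Set.mem_singleton_iff, Finset.coe_insert,
        Set.mem_insert_iff, Finset.mem_coe]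
      tauto
    rw [hg, hs] at ih'
    exact ReflTransGen.head hstep ih'

variable {k : ℕ}

theorem key_lemma [Fintype V] (G : SimpleGraph V) (F : Fin 5 → Fin k → V)
    (hne : ∀ r s i j, F r i = F s j → r = s ∧ i = j)
    (hadj : ∀ x y, (bigGraph F (fun _ => 0)).Adj x y ↔
      (G.Adj x y ∧ (∃ r i, x = F r i) ∧ (∃ r i, y = F r i))) :
    IsVertexMinor (pairingGraph (F 0) (F 4)) (Set.range (F 0) ∪ Set.range (F 4)) G Set.univ := by
  classical
  set SS : Set V := {x | ∃ r i, x = F r i} with hSS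
  have hDsub : ↑(SSᶜ.toFinset) ⊆ (Set.univ : Set V) := fun x _ => trivial
  have step0 := delete_many SSᶜ.toFinset G Set.univ hDsub
  rw [Set.coe_toFinset] at step0
  have hg0 : delSet G SSᶜ = bigGraph F (fun _ => 0) := by
    ext x y
    rw [hadj]
    simp only [delSet, Set.mem_compl_iff, not_not, hSS, Set.mem_setOf_eq]
    try tauto
  have hs0 : Set.univ \ SSᶜ = SS := by simp
  rw [hg0, hs0] at step0
  -- identify (bigGraph (fun _ => 0), SS) with (bigGraph (dts 0 0), keep (dts 0 0))
  have hd0 : (fun _ : Fin k => 0) = dts 0 0 := by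
    funext i
    simp only [dts]
    split_ifs <;> omega
  have hk0 : SS = keep F (dts 0 0) := by
    ext x
    simp only [hSS, Set.mem_setOf_eq, keep]
    constructor
    · rintro ⟨r, i, rfl⟩
      refine ⟨r, i, rfl, ?_⟩
      have hv : dts 0 0 i = 0 := by
        simp only [dts]
        split_ifs <;> omega
      fin_cases r <;> simp [condFn, hv]
    · rintro ⟨r, i, rfl, -⟩
      exact ⟨r, i, rfl⟩
  rw [hd0, hk0] at step0
  have step1 := chain hne k le_rfl
  -- final identification
  have hgk : bigGraph F (dts k 0) = pairingGraph (F 0) (F 4) := by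
    ext x y
    simp only [bigGraph, pairingGraph]
    constructor
    · rintro ⟨hxy, i, p, hp, hpr⟩
      have : dts k 0 i = 6 := by simp [dts, i.isLt]
      rw [this] at hp
      have hp' : p = ((0 : Fin 5), (4 : Fin 5)) := by
        have : shapePairs 6 = [(0,4)] := rfl
        rw [this] at hp
        simpa using hp
      subst hp'
      exact ⟨hxy, i, hpr⟩
    · rintro ⟨hxy, i, hpr⟩
      have : dts k 0 i = 6 := by simp [dts, i.isLt]
      refine ⟨hxy, i, (0,4), ?_, hpr⟩
      rw [this]
      simp [shapePairs]
  have hkk : keep F (dts k 0) = Set.range (F 0) ∪ Set.range (F 4) := by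
    ext x
    simp only [keep, Set.mem_setOf_eq, Set.mem_union, Set.mem_range]
    constructor
    · rintro ⟨r, i, rfl, hc⟩
      have h6 : dts k 0 i = 6 := by simp [dts, i.isLt]
      rcases hc with rfl | rfl | ⟨rfl, h⟩ | ⟨rfl, h⟩ | ⟨rfl, h⟩
      · exact Or.inl ⟨i, rfl⟩
      · exact Or.inr ⟨i, rfl⟩
      all_goals (rw [h6] at h; omega)
    · rintro (⟨i, rfl⟩ | ⟨i, rfl⟩)
      · exact ⟨0, i, rfl, Or.inl rfl⟩
      · exact ⟨4, i, rfl, Or.inr (Or.inl rfl)⟩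
  rw [hgk, hkk] at step1
  exact step0.trans step1

end VMAux
namespace VMAux

variable {V W : Type*}

def graphMap (e : V ≃ W) (G : SimpleGraph V) : SimpleGraph W where
  Adj x y := G.Adj (e.symm x) (e.symm y)
  symm := ⟨fun _ _ h => h.symm⟩
  loopless := ⟨fun _ h => G.loopless.irrefl _ h⟩

lemma graphMap_localComp (e : V ≃ W) (G : SimpleGraph V) (v : V) :
    graphMap e (localComp G v) = localComp (graphMap e G) (e v) := by
  ext x y
  have hxy : (e.symm x = e.symm y) ↔ x = y := e.symm.injective.eq_iff
  simp only [graphMap, localComp, Equiv.symm_apply_apply, ne_eq, hxy]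

lemma graphMap_deleteVert (e : V ≃ W) (G : SimpleGraph V) (v : V) :
    graphMap e (deleteVert G v) = deleteVert (graphMap e G) (e v) := by
  ext x y
  have h : ∀ z : W, (e.symm z = v) ↔ z = e v := fun z => e.symm_apply_eq
  simp only [graphMap, deleteVert, ne_eq, h]

lemma vmstep_map (e : V ≃ W) {a b : SimpleGraph V × Set V} (h : VMStep a b) :
    VMStep (graphMap e a.1, e '' a.2) (graphMap e b.1, e '' b.2) := by
  cases h with
  | lc G S v hv =>
    have := VMStep.lc (graphMap e G) (e '' S) (e v) ⟨v, hv, rfl⟩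
    rwa [← graphMap_localComp] at this
  | del G S v hv =>
    have := VMStep.del (graphMap e G) (e '' S) (e v) ⟨v, hv, rfl⟩
    rwa [← graphMap_deleteVert, ← Set.image_singleton, ← Set.image_diff e.injective] at this

lemma ivm_map (e : V ≃ W) {H G : SimpleGraph V} {KH KG : Set V}
    (h : IsVertexMinor H KH G KG) :
    IsVertexMinor (graphMap e H) (e '' KH) (graphMap e G) (e '' KG) :=
  Relation.ReflTransGen.lift
    (fun p : SimpleGraph V × Set V => ((graphMap e p.1, e '' p.2) : SimpleGraph W × Set W))
    (fun _ _ hab => vmstep_map e hab) _ _ h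

lemma graphMap_pairingGraph {k : ℕ} (e : V ≃ W) (u v : Fin k → V) :
    graphMap e (pairingGraph u v) = pairingGraph (e ∘ u) (e ∘ v) := by
  ext x y
  have hxy : (e.symm x = e.symm y) ↔ x = y := e.symm.injective.eq_iff
  have h : ∀ (z : W) (w : V), (e.symm z = w) ↔ z = e w := fun z w => e.symm_apply_eq
  simp only [graphMap, pairingGraph, ne_eq, hxy, h, Function.comp_apply,
    Equiv.apply_symm_apply]

end VMAux
namespace VMAux

open Module Submodule

variable {F : Type*} [Field F]

lemma finrank_V3 : finrank F (Fin 3 → F) = 3 := Module.finrank_fin_fun F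

instance : Membership (ProjPoint F) (ProjLine F) :=
  ⟨fun l p => p.val ≤ l.val⟩

lemma memPL_iff (p : ProjPoint F) (l : ProjLine F) : p ∈ l ↔ p.val ≤ l.val := Iff.rfl

lemma point_ne_iff (p q : ProjPoint F) : p ≠ q ↔ p.val ≠ q.val :=
  ⟨fun h h' => h (Subtype.ext h'), fun h h' => h (congrArg Subtype.val h')⟩

lemma line_ne_iff (l m : ProjLine F) : l ≠ m ↔ l.val ≠ m.val :=
  ⟨fun h h' => h (Subtype.ext h'), fun h h' => h (congrArg Subtype.val h')⟩

lemma point_eq_of_le {p q : ProjPoint F} (h : p.val ≤ q.val) : p = q := by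
  refine Subtype.ext (Submodule.eq_of_le_of_finrank_le h ?_)
  rw [p.2, q.2]

lemma line_eq_of_le {l m : ProjLine F} (h : l.val ≤ m.val) : l = m := by
  refine Subtype.ext (Submodule.eq_of_le_of_finrank_le h ?_)
  rw [l.2, m.2]

lemma finrank_inf_lines (l m : ProjLine F) (h : l ≠ m) :
    finrank F ↥(l.val ⊓ m.val) = 1 := by
  have hne : ¬ l.val ≤ m.val := fun hle => h (line_eq_of_le hle)
  have hlt : l.val < l.val ⊔ m.val := by
    rcases lt_or_eq_of_le (le_sup_left : l.val ≤ l.val ⊔ m.val) with h' | h'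
    · exact h'
    · exact absurd (line_eq_of_le (le_sup_right.trans h'.ge)).symm h
  have h3 : finrank F ↥(l.val ⊔ m.val) = 3 := by
    have hgt := Submodule.finrank_lt_finrank_of_lt hlt
    rw [l.2] at hgt
    have hle3 : finrank F ↥(l.val ⊔ m.val) ≤ 3 := by
      have h' := (l.val ⊔ m.val).finrank_le
      rwa [finrank_V3] at h'
    omega
  have := Submodule.finrank_sup_add_finrank_inf_eq l.val m.val
  rw [h3, l.2, m.2] at this
  omega

lemma finrank_sup_points (p q : ProjPoint F) (h : p ≠ q) :
    finrank F ↥(p.val ⊔ q.val) = 2 := by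
  have hne : ¬ p.val ≤ q.val := fun hle => h (point_eq_of_le hle)
  have hlt : p.val ⊓ q.val < p.val := by
    rcases lt_or_eq_of_le (inf_le_left : p.val ⊓ q.val ≤ p.val) with h' | h'
    · exact h'
    · exact absurd (point_eq_of_le (h'.ge.trans inf_le_right)) h
  have h0 : finrank F ↥(p.val ⊓ q.val) = 0 := by
    have := Submodule.finrank_lt_finrank_of_lt hlt
    rw [p.2] at this
    omega
  have := Submodule.finrank_sup_add_finrank_inf_eq p.val q.val
  rw [h0, p.2, q.2] at this
  omega

/-- The line through two distinct points. -/
def lineThrough (p q : ProjPoint F) (h : p ≠ q) : ProjLine F :=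
  ⟨p.val ⊔ q.val, finrank_sup_points p q h⟩

lemma left_mem_lineThrough (p q : ProjPoint F) (h : p ≠ q) : p ∈ lineThrough p q h :=
  le_sup_left

lemma right_mem_lineThrough (p q : ProjPoint F) (h : p ≠ q) : q ∈ lineThrough p q h :=
  le_sup_right

/-- The intersection point of two distinct lines. -/
def meetPoint (l m : ProjLine F) (h : l ≠ m) : ProjPoint F :=
  ⟨l.val ⊓ m.val, finrank_inf_lines l m h⟩

lemma eq_or_eq_PL {p₁ p₂ : ProjPoint F} {l₁ l₂ : ProjLine F}
    (h11 : p₁ ∈ l₁) (h21 : p₂ ∈ l₁) (h12 : p₁ ∈ l₂) (h22 : p₂ ∈ l₂) :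
    p₁ = p₂ ∨ l₁ = l₂ := by
  by_cases h : l₁ = l₂
  · exact Or.inr h
  · left
    have hle1 : p₁.val ≤ l₁.val ⊓ l₂.val := le_inf h11 h12
    have hle2 : p₂.val ≤ l₁.val ⊓ l₂.val := le_inf h21 h22
    have hfr := finrank_inf_lines l₁ l₂ h
    have e1 : p₁.val = l₁.val ⊓ l₂.val :=
      Submodule.eq_of_le_of_finrank_le hle1 (by rw [hfr, p₁.2])
    have e2 : p₂.val = l₁.val ⊓ l₂.val :=
      Submodule.eq_of_le_of_finrank_le hle2 (by rw [hfr, p₂.2])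
    exact Subtype.ext (e1.trans e2.symm)

lemma exists_point_not_mem (l : ProjLine F) : ∃ p : ProjPoint F, p ∉ l := by
  have hne : l.val ≠ ⊤ := by
    intro h
    have := l.2
    rw [h, finrank_top, finrank_V3] at this
    omega
  obtain ⟨x, hx⟩ : ∃ x, x ∉ l.val := by
    by_contra h
    push_neg at h
    exact hne (Submodule.eq_top_iff'.2 h)
  have hx0 : x ≠ 0 := fun h => hx (h ▸ l.val.zero_mem)
  refine ⟨(⟨Submodule.span F {x}, finrank_span_singleton hx0⟩ : ProjPoint F), ?_⟩
  show ¬ (Submodule.span F {x} ≤ l.val)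
  intro hle
  exact hx (hle (Submodule.mem_span_singleton_self x))

lemma exists_line_not_mem (p : ProjPoint F) : ∃ l : ProjLine F, p ∉ l := by
  obtain ⟨q, hq⟩ := Submodule.exists_isCompl p.val
  have hfr : finrank F ↥q = 2 := by
    have := Submodule.finrank_add_eq_of_isCompl hq
    rw [p.2, finrank_V3] at this
    omega
  refine ⟨(⟨q, hfr⟩ : ProjLine F), ?_⟩
  show ¬ (p.val ≤ q)
  intro hle
  have : p.val = ⊥ := by
    have := hq.inf_eq_bot
    rw [inf_eq_left.2 hle] at this
    exact this
  have h1 := p.2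
  rw [this, finrank_bot] at h1
  omega

section config

def cv0 : Fin 3 → F := ![1,0,0]
def cv1 : Fin 3 → F := ![0,1,0]
def cv2 : Fin 3 → F := ![0,0,1]
def cv02 : Fin 3 → F := ![1,0,1]
def cv12 : Fin 3 → F := ![0,1,1]

lemma li_pair {a b : Fin 3 → F}
    (h : ∀ s t : F, s • a + t • b = 0 → s = 0 ∧ t = 0) :
    LinearIndependent F ![a, b] := by
  rw [LinearIndependent.pair_iff]
  exact h

lemma cv_li_12 : LinearIndependent F ![(cv1 : Fin 3 → F), cv2] := by
  refine li_pair fun s t h => ?_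
  have h1 := congrFun h 1
  have h2 := congrFun h 2
  simp [cv1, cv2] at h1 h2
  exact ⟨h1, h2⟩

lemma cv_li_1_02 : LinearIndependent F ![(cv1 : Fin 3 → F), cv02] := by
  refine li_pair fun s t h => ?_
  have h1 := congrFun h 1
  have h2 := congrFun h 0
  simp [cv1, cv02] at h1 h2
  exact ⟨h1, h2⟩

lemma cv_li_0_12 : LinearIndependent F ![(cv0 : Fin 3 → F), cv12] := by
  refine li_pair fun s t h => ?_
  have h1 := congrFun h 0
  have h2 := congrFun h 1
  simp [cv0, cv12] at h1 h2
  exact ⟨h1, h2⟩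

def mkL2 (a b : Fin 3 → F) (h : LinearIndependent F ![a, b]) : ProjLine F :=
  ⟨Submodule.span F {a, b}, by
    have : ({a, b} : Set (Fin 3 → F)) = Set.range ![a, b] := by
      simp [Matrix.range_cons, Matrix.range_empty, Set.pair_comm]
    rw [this, finrank_span_eq_card h]
    simp⟩

def mkP1 (a : Fin 3 → F) (h : a ≠ 0) : ProjPoint F :=
  ⟨Submodule.span F {a}, finrank_span_singleton h⟩

lemma mkP1_mem_mkL2 {a b c : Fin 3 → F} (ha : a ≠ 0) (h : LinearIndependent F ![b, c])
    (hm : a ∈ Submodule.span F ({b, c} : Set (Fin 3 → F))) : mkP1 a ha ∈ mkL2 b c h := by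
  rw [memPL_iff]
  exact (Submodule.span_singleton_le_iff_mem a _).2 hm

lemma mkP1_not_mem_mkL2 {a b c : Fin 3 → F} (ha : a ≠ 0) (h : LinearIndependent F ![b, c])
    (hm : a ∉ Submodule.span F ({b, c} : Set (Fin 3 → F))) : mkP1 a ha ∉ mkL2 b c h := by
  rw [memPL_iff]
  intro hle
  exact hm ((Submodule.span_singleton_le_iff_mem a _).1 hle)

lemma cv0_ne : (cv0 : Fin 3 → F) ≠ 0 := fun h => by
  have := congrFun h 0
  simp [cv0] at this

lemma cv1_ne : (cv1 : Fin 3 → F) ≠ 0 := fun h => by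
  have := congrFun h 1
  simp [cv1] at this

lemma cv2_ne : (cv2 : Fin 3 → F) ≠ 0 := fun h => by
  have := congrFun h 2
  simp [cv2] at this

lemma exists_config_PL :
    ∃ (p₁ p₂ p₃ : ProjPoint F) (l₁ l₂ l₃ : ProjLine F),
      p₁ ∉ l₂ ∧ p₁ ∉ l₃ ∧ p₂ ∉ l₁ ∧ p₂ ∈ l₂ ∧ p₂ ∈ l₃ ∧ p₃ ∉ l₁ ∧ p₃ ∈ l₂ ∧ p₃ ∉ l₃ := by
  refine ⟨mkP1 cv0 cv0_ne, mkP1 cv1 cv1_ne, mkP1 cv2 cv2_ne,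
    mkL2 cv0 cv12 cv_li_0_12, mkL2 cv1 cv2 cv_li_12, mkL2 cv1 cv02 cv_li_1_02,
    ?_, ?_, ?_, ?_, ?_, ?_, ?_, ?_⟩
  · refine mkP1_not_mem_mkL2 _ _ ?_
    rw [Submodule.mem_span_pair]
    rintro ⟨c, d, h⟩
    have h0 := congrFun h 0
    have h1 := congrFun h 1
    simp [cv0, cv1, cv2] at h0 h1
  · refine mkP1_not_mem_mkL2 _ _ ?_
    rw [Submodule.mem_span_pair]
    rintro ⟨c, d, h⟩
    have h0 := congrFun h 0
    have h2 := congrFun h 2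
    simp [cv0, cv1, cv02] at h0 h2
    rw [h2] at h0
    simp at h0
  · refine mkP1_not_mem_mkL2 _ _ ?_
    rw [Submodule.mem_span_pair]
    rintro ⟨c, d, h⟩
    have h1 := congrFun h 1
    have h2 := congrFun h 2
    simp [cv0, cv1, cv12] at h1 h2
    rw [h2] at h1
    simp at h1
  · refine mkP1_mem_mkL2 _ _ ?_
    exact Submodule.subset_span (by simp)
  · refine mkP1_mem_mkL2 _ _ ?_
    exact Submodule.subset_span (by simp)
  · refine mkP1_not_mem_mkL2 _ _ ?_
    rw [Submodule.mem_span_pair]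
    rintro ⟨c, d, h⟩
    have h2 := congrFun h 2
    have h1 := congrFun h 1
    simp [cv0, cv2, cv12] at h1 h2
    rw [h1] at h2
    simp at h2
  · refine mkP1_mem_mkL2 _ _ ?_
    exact Submodule.subset_span (by simp)
  · refine mkP1_not_mem_mkL2 _ _ ?_
    rw [Submodule.mem_span_pair]
    rintro ⟨c, d, h⟩
    have h0 := congrFun h 0
    have h2 := congrFun h 2
    simp [cv2, cv1, cv02] at h0 h2
    rw [h0] at h2
    simp at h2

end config

noncomputable instance : Configuration.ProjectivePlane (ProjPoint F) (ProjLine F) where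
  mkPoint h := meetPoint _ _ h
  mkPoint_ax h := ⟨inf_le_left, inf_le_right⟩
  mkLine h := lineThrough _ _ h
  mkLine_ax h := ⟨le_sup_left, le_sup_right⟩
  exists_point := exists_point_not_mem
  exists_line := exists_line_not_mem
  eq_or_eq := fun h1 h2 h3 h4 => eq_or_eq_PL h1 h2 h3 h4
  exists_config := exists_config_PL

end VMAux
namespace VMAux

open Module Submodule
open scoped LinearAlgebra.Projectivization

variable {F : Type*} [Field F]

instance [Fintype F] : Finite (Submodule F (Fin 3 → F)) :=
  Finite.of_injective (fun s => (s : Set (Fin 3 → F))) SetLike.coe_injective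

instance [Fintype F] : Finite (ProjPoint F) := by
  unfold ProjPoint; infer_instance

instance [Fintype F] : Finite (ProjLine F) := by
  unfold ProjLine; infer_instance

noncomputable def projEquiv {K M N : Type*} [Field K] [AddCommGroup M] [Module K M]
    [AddCommGroup N] [Module K N] (e : M ≃ₗ[K] N) : ℙ K M ≃ ℙ K N where
  toFun := Projectivization.map e.toLinearMap e.injective
  invFun := Projectivization.map e.symm.toLinearMap e.symm.injective
  left_inv x := by
    induction x using Projectivization.ind with
    | h v hv => simp [Projectivization.map_mk]
  right_inv x := by
    induction x using Projectivization.ind with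
    | h v hv => simp [Projectivization.map_mk]

lemma card_points_on_line [Fintype F] (l : ProjLine F) :
    Nat.card {p : ProjPoint F // p ∈ l} = Fintype.card F + 1 := by
  classical
  have E1 : {p : ProjPoint F // p ∈ l} ≃
      {x : {H : Submodule F (Fin 3 → F) // H ≤ l.val} // finrank F x.val = 1} :=
    { toFun := fun p => ⟨⟨p.val.val, p.prop⟩, p.val.prop⟩
      invFun := fun x => ⟨⟨x.val.val, x.prop⟩, x.val.prop⟩
      left_inv := fun p => rfl
      right_inv := fun x => rfl }
  have E2 : {q : Submodule F ↥(l.val) // finrank F q = 1} ≃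
      {x : {H : Submodule F (Fin 3 → F) // H ≤ l.val} // finrank F x.val = 1} := by
    refine (Submodule.MapSubtype.orderIso l.val).toEquiv.subtypeEquiv fun q => ?_
    rw [show ((Submodule.MapSubtype.orderIso l.val).toEquiv q).val = q.map l.val.subtype from rfl,
      Submodule.finrank_map_subtype_eq]
  have E3 : ℙ F ↥(l.val) ≃ {q : Submodule F ↥(l.val) // finrank F q = 1} :=
    Projectivization.equivSubmodule F ↥(l.val)
  have hfr : finrank F ↥(l.val) = finrank F (Fin 2 → F) := by
    rw [l.2, Module.finrank_fin_fun]
  have E4 : ℙ F ↥(l.val) ≃ ℙ F (Fin 2 → F) := projEquiv (LinearEquiv.ofFinrankEq _ _ hfr)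
  have E5 : OnePoint F ≃ ℙ F (Fin 2 → F) := OnePoint.equivProjectivization F
  have E : {p : ProjPoint F // p ∈ l} ≃ OnePoint F :=
    ((((E1.trans E2.symm).trans E3.symm).trans E4).trans E5.symm)
  rw [Nat.card_congr E]
  have : Nat.card (OnePoint F) = Nat.card (Option F) := rfl
  rw [this, Nat.card_eq_fintype_card, Fintype.card_option]

lemma order_PL_eq [Fintype F] :
    Configuration.ProjectivePlane.order (ProjPoint F) (ProjLine F) = Fintype.card F := by
  have l0 : ProjLine F := mkL2 cv1 cv2 cv_li_12
  have h := Configuration.ProjectivePlane.pointCount_eq (ProjPoint F) l0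
  have h2 : Configuration.pointCount (ProjPoint F) l0 = Fintype.card F + 1 :=
    card_points_on_line l0
  rw [h2] at h
  omega

end VMAux
namespace VMAux

open Configuration Configuration.ProjectivePlane

def incAbs (P L : Type*) [Membership P L] : SimpleGraph (P ⊕ L) where
  Adj x y :=
    (∃ p l, x = Sum.inl p ∧ y = Sum.inr l ∧ p ∈ l) ∨
    (∃ p l, x = Sum.inr l ∧ y = Sum.inl p ∧ p ∈ l)
  symm := by
    constructor
    rintro x y (⟨p, l, rfl, rfl, h⟩ | ⟨p, l, rfl, rfl, h⟩)
    · exact Or.inr ⟨p, l, rfl, rfl, h⟩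
    · exact Or.inl ⟨p, l, rfl, rfl, h⟩
  loopless := by constructor; rintro x (⟨p, l, h1, h2, -⟩ | ⟨p, l, h1, h2, -⟩) <;> simp_all

def mkF {P L : Type*} {k : ℕ} (u : Fin k → P) (a : Fin k → L) (w : Fin k → P)
    (c : Fin k → L) (v : Fin k → P) : Fin 5 → Fin k → P ⊕ L
  | 0 => Sum.inl ∘ u
  | 1 => Sum.inr ∘ a
  | 2 => Sum.inl ∘ w
  | 3 => Sum.inr ∘ c
  | 4 => Sum.inl ∘ v

section partB

variable {P L : Type*} [Membership P L] [Configuration.ProjectivePlane P L]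

open Classical in
noncomputable def mkL [Nonempty L] (p p' : P) : L :=
  if h : p = p' then Classical.arbitrary L else HasLines.mkLine h

lemma mkL_ax [Nonempty L] {p p' : P} (h : p ≠ p') : p ∈ mkL (L := L) p p' ∧ p' ∈ mkL (L := L) p p' := by
  rw [mkL]
  rw [dif_neg h]
  exact HasLines.mkLine_ax h

variable [Finite P] [Finite L]

theorem partB {k : ℕ} (hk : 5 * k ≤ order P L + 4)
    (u v : Fin k → P) (hinj : Function.Injective (Sum.elim u v)) :
    IsVertexMinor (pairingGraph (Sum.inl ∘ u) (Sum.inl ∘ v))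
      (Set.range (Sum.inl ∘ u) ∪ Set.range (Sum.inl ∘ v)) (incAbs P L) Set.univ := by
  classical
  cases nonempty_fintype P
  cases nonempty_fintype L
  have hq2 : 2 ≤ order P L := one_lt_order P L
  have hNL : Nonempty L := by
    rw [← Fintype.card_pos_iff, card_lines (P := P)]
    positivity
  -- injectivity consequences
  have uinj : Function.Injective u := fun i j h => by
    have := @hinj (Sum.inl i) (Sum.inl j) (by simpa using h)
    simpa using this
  have vinj : Function.Injective v := fun i j h => by
    have := @hinj (Sum.inr i) (Sum.inr j) (by simpa using h)
    simpa using this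
  have huv : ∀ i j, u i ≠ v j := fun i j h => by
    have := @hinj (Sum.inl i) (Sum.inr j) (by simpa using h)
    simpa using this
  -- the chosen points
  set C : Finset P := Finset.image u Finset.univ ∪ Finset.image v Finset.univ with hC
  have huC : ∀ i, u i ∈ C := fun i => Finset.mem_union_left _ (Finset.mem_image_of_mem u (Finset.mem_univ i))
  have hvC : ∀ i, v i ∈ C := fun i => Finset.mem_union_right _ (Finset.mem_image_of_mem v (Finset.mem_univ i))
  have hmemC : ∀ p ∈ C, ∃ i, p = u i ∨ p = v i := by
    intro p hp
    rw [hC, Finset.mem_union] at hp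
    rcases hp with hp | hp <;> obtain ⟨i, -, rfl⟩ := Finset.mem_image.1 hp
    · exact ⟨i, Or.inl rfl⟩
    · exact ⟨i, Or.inr rfl⟩
  have hCcard : C.card = 2 * k := by
    rw [hC, Finset.card_union_of_disjoint, Finset.card_image_of_injective _ uinj,
      Finset.card_image_of_injective _ vinj]
    · simp; omega
    · rw [Finset.disjoint_left]
      rintro p hp1 hp2
      obtain ⟨i, -, rfl⟩ := Finset.mem_image.1 hp1
      obtain ⟨j, -, hj⟩ := Finset.mem_image.1 hp2
      exact huv i j hj.symm
  -- count of lines through a point, as a filter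
  have hfilterL : ∀ p : P, (Finset.univ.filter (fun l : L => p ∈ l)).card = order P L + 1 := by
    intro p
    have h1 := lineCount_eq L p
    rw [lineCount, Nat.card_eq_fintype_card, Fintype.card_subtype] at h1
    exact h1
  have hfilterP : ∀ l : L, (Finset.univ.filter (fun p : P => p ∈ l)).card = order P L + 1 := by
    intro l
    have h1 := pointCount_eq P l
    rw [pointCount, Nat.card_eq_fintype_card, Fintype.card_subtype] at h1
    exact h1
  -- a clean line M
  obtain ⟨M, hMnot⟩ : ∃ M : L, M ∉ C.biUnion (fun p => Finset.univ.filter (fun l => p ∈ l)) := by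
    by_contra h
    push_neg at h
    have hsub : Finset.univ ⊆ C.biUnion (fun p => Finset.univ.filter (fun l => p ∈ l)) :=
      fun l _ => h l
    have h1 := Finset.card_le_card hsub
    have h2 := Finset.card_biUnion_le (s := C) (t := fun p => Finset.univ.filter (fun l : L => p ∈ l))
    simp only [hfilterL] at h2
    rw [Finset.sum_const, smul_eq_mul, hCcard] at h2
    rw [Finset.card_univ, card_lines (P := P)] at h1
    have h2k : 2 * k ≤ order P L := by omega
    have h3 : 2 * k * (order P L + 1) ≤ order P L * (order P L + 1) :=
      Nat.mul_le_mul_right _ h2k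
    have h4 : order P L * (order P L + 1) < order P L ^ 2 + order P L + 1 := by
      ring_nf
      omega
    omega
  have hMclean : ∀ p ∈ C, p ∉ M := fun p hp hmem =>
    hMnot (Finset.mem_biUnion.2 ⟨p, hp, by simp [hmem]⟩)
  -- bad lines for each index
  set badL : Fin k → Finset L := fun i => insert (mkL (u i) (v i))
    (((C.erase (u i)).erase (v i)).biUnion (fun p => {mkL (u i) p, mkL (v i) p})) with hbadL
  have hbadmem1 : ∀ i, mkL (u i) (v i) ∈ badL i := fun i => Finset.mem_insert_self _ _
  have hbadmem2 : ∀ i p, p ∈ C → p ≠ u i → p ≠ v i → mkL (u i) p ∈ badL i ∧ mkL (v i) p ∈ badL i := by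
    intro i p hp h1 h2
    have hp' : p ∈ (C.erase (u i)).erase (v i) :=
      Finset.mem_erase.2 ⟨h2, Finset.mem_erase.2 ⟨h1, hp⟩⟩
    constructor <;> refine Finset.mem_insert_of_mem (Finset.mem_biUnion.2 ⟨p, hp', by simp⟩)
  have hbadcard : ∀ i, (badL i).card ≤ 4 * k - 3 := by
    intro i
    have hk1 : 1 ≤ k := i.pos
    have hvmem : v i ∈ C.erase (u i) := Finset.mem_erase.2 ⟨fun h => huv i i h.symm, hvC i⟩
    have he : ((C.erase (u i)).erase (v i)).card = 2 * k - 1 - 1 := by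
      rw [Finset.card_erase_of_mem hvmem, Finset.card_erase_of_mem (huC i), hCcard]
    have hb1 : (badL i).card ≤ (((C.erase (u i)).erase (v i)).biUnion
        (fun p => {mkL (u i) p, mkL (v i) p})).card + 1 := Finset.card_insert_le _ _
    have hb2 : (((C.erase (u i)).erase (v i)).biUnion
        (fun p => {mkL (u i) p, mkL (v i) p})).card ≤
        ∑ p ∈ (C.erase (u i)).erase (v i), ({mkL (u i) p, mkL (v i) p} : Finset L).card :=
      Finset.card_biUnion_le
    have hb3 : ∑ p ∈ (C.erase (u i)).erase (v i), ({mkL (u i) p, mkL (v i) p} : Finset L).card ≤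
        ∑ _p ∈ (C.erase (u i)).erase (v i), 2 := by
      refine Finset.sum_le_sum fun p _ => ?_
      exact (Finset.card_insert_le _ _).trans (by simp)
    rw [Finset.sum_const, smul_eq_mul, he] at hb3
    omega
  -- each bad line contains a chosen point, hence differs from M
  have hbadne : ∀ i, ∀ l ∈ badL i, l ≠ M := by
    intro i l hl
    rw [hbadL] at hl
    rcases Finset.mem_insert.1 hl with rfl | hl
    · intro h
      exact hMclean (u i) (huC i) (h ▸ (mkL_ax (huv i i)).1)
    · obtain ⟨p, hp, hl⟩ := Finset.mem_biUnion.1 hl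
      have hpC := (Finset.mem_erase.1 hp).2
      have hpu : p ≠ u i := (Finset.mem_erase.1 (Finset.mem_erase.1 hp).2).1
      have hpC' := (Finset.mem_erase.1 (Finset.mem_erase.1 hp).2).2
      rcases Finset.mem_insert.1 hl with rfl | hl
      · intro h
        exact hMclean (u i) (huC i) (h ▸ (mkL_ax (Ne.symm hpu)).1)
      · rw [Finset.mem_singleton] at hl
        subst hl
        intro h
        have hpv : p ≠ v i := (Finset.mem_erase.1 hp).1
        exact hMclean (v i) (hvC i) (h ▸ (mkL_ax (Ne.symm hpv)).1)
  -- good points: on M, avoiding all bad lines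
  set good : Fin k → Finset P := fun i =>
    Finset.univ.filter (fun x => x ∈ M ∧ ∀ l ∈ badL i, x ∉ l) with hgood
  have hgoodcard : ∀ i, k ≤ (good i).card := by
    intro i
    have hk1 : 1 ≤ k := i.pos
    have hsub : Finset.univ.filter (fun x : P => x ∈ M) ⊆
        good i ∪ (badL i).biUnion (fun l => Finset.univ.filter (fun x => x ∈ M ∧ x ∈ l)) := by
      intro x hx
      rw [Finset.mem_filter] at hx
      by_cases hb : ∀ l ∈ badL i, x ∉ l
      · exact Finset.mem_union_left _ (by rw [hgood]; simp only [Finset.mem_filter]; exact ⟨hx.1, hx.2, hb⟩)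
      · push_neg at hb
        obtain ⟨l, hl, hxl⟩ := hb
        exact Finset.mem_union_right _ (Finset.mem_biUnion.2 ⟨l, hl, by simp [hx.2, hxl]⟩)
    have hone : ∀ l ∈ badL i, (Finset.univ.filter (fun x : P => x ∈ M ∧ x ∈ l)).card ≤ 1 := by
      intro l hl
      refine Finset.card_le_one.2 fun x hx y hy => ?_
      rw [Finset.mem_filter] at hx hy
      rcases Nondegenerate.eq_or_eq hx.2.1 hy.2.1 hx.2.2 hy.2.2 with h | h
      · exact h
      · exact absurd h.symm (hbadne i l hl)
    have h1 := Finset.card_le_card hsub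
    have h2 : ((badL i).biUnion (fun l => Finset.univ.filter (fun x => x ∈ M ∧ x ∈ l))).card
        ≤ 4 * k - 3 := by
      calc _ ≤ ∑ l ∈ badL i, (Finset.univ.filter (fun x : P => x ∈ M ∧ x ∈ l)).card :=
            Finset.card_biUnion_le
      _ ≤ ∑ _l ∈ badL i, 1 := Finset.sum_le_sum hone
      _ ≤ 4 * k - 3 := by
          rw [Finset.sum_const, smul_eq_mul, mul_one]
          exact hbadcard i
    have h3 := Finset.card_union_le (good i)
      ((badL i).biUnion (fun l => Finset.univ.filter (fun x => x ∈ M ∧ x ∈ l)))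
    have h4 : (Finset.univ.filter (fun x : P => x ∈ M)).card = order P L + 1 := hfilterP M
    omega
  -- Hall's theorem gives injective helpers
  obtain ⟨w, hwinj, hwmem⟩ :=
    (Finset.all_card_le_biUnion_card_iff_exists_injective good).1 (by
      intro s
      rcases s.eq_empty_or_nonempty with rfl | ⟨i, hi⟩
      · simp
      · calc s.card ≤ Fintype.card (Fin k) := Finset.card_le_univ s
        _ = k := Fintype.card_fin k
        _ ≤ (good i).card := hgoodcard i
        _ ≤ (s.biUnion good).card :=
            Finset.card_le_card (Finset.subset_biUnion_of_mem good hi))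
  have hwM : ∀ i, w i ∈ M := fun i => by
    have := hwmem i
    rw [hgood, Finset.mem_filter] at this
    exact this.2.1
  have hwgood : ∀ i, ∀ l ∈ badL i, w i ∉ l := fun i => by
    have := hwmem i
    rw [hgood, Finset.mem_filter] at this
    exact this.2.2
  have hwC : ∀ i p, p ∈ C → w i ≠ p := fun i p hp h =>
    hMclean p hp (h ▸ hwM i)
  have hwu : ∀ i j, w i ≠ u j := fun i j => hwC i (u j) (huC j)
  have hwv : ∀ i j, w i ≠ v j := fun i j => hwC i (v j) (hvC j)
  -- the connecting lines
  set a : Fin k → L := fun i => mkL (u i) (w i) with ha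
  set c : Fin k → L := fun i => mkL (w i) (v i) with hc
  have hua : ∀ i, u i ∈ a i := fun i => (mkL_ax (Ne.symm (hwu i i))).1
  have hwa : ∀ i, w i ∈ a i := fun i => (mkL_ax (Ne.symm (hwu i i))).2
  have hwc : ∀ i, w i ∈ c i := fun i => (mkL_ax (hwv i i)).1
  have hvc : ∀ i, v i ∈ c i := fun i => (mkL_ax (hwv i i)).2
  -- key exclusion lemmas
  have key1 : ∀ i (p : P), p ∈ C → p ≠ u i → p ∈ a i → False := by
    intro i p hpC hpu hmem
    have hbad : ∃ l, l ∈ badL i ∧ u i ∈ l ∧ p ∈ l := by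
      by_cases hpv : p = v i
      · subst hpv
        exact ⟨mkL (u i) (v i), hbadmem1 i, (mkL_ax (huv i i)).1, (mkL_ax (huv i i)).2⟩
      · exact ⟨mkL (u i) p, (hbadmem2 i p hpC hpu hpv).1,
          (mkL_ax (Ne.symm hpu)).1, (mkL_ax (Ne.symm hpu)).2⟩
    obtain ⟨bl, hbl, hu1, hp1⟩ := hbad
    rcases Nondegenerate.eq_or_eq (hua i) hmem hu1 hp1 with h | h
    · exact hpu h.symm
    · exact hwgood i bl hbl (h ▸ hwa i)
  have key2 : ∀ i (p : P), p ∈ C → p ≠ v i → p ∈ c i → False := by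
    intro i p hpC hpv hmem
    have hbad : ∃ l, l ∈ badL i ∧ v i ∈ l ∧ p ∈ l := by
      by_cases hpu : p = u i
      · subst hpu
        exact ⟨mkL (u i) (v i), hbadmem1 i, (mkL_ax (huv i i)).2, (mkL_ax (huv i i)).1⟩
      · exact ⟨mkL (v i) p, (hbadmem2 i p hpC hpu hpv).2,
          (mkL_ax (Ne.symm hpv)).1, (mkL_ax (Ne.symm hpv)).2⟩
    obtain ⟨bl, hbl, hv1, hp1⟩ := hbad
    rcases Nondegenerate.eq_or_eq (hvc i) hmem hv1 hp1 with h | h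
    · exact hpv h.symm
    · exact hwgood i bl hbl (h ▸ hwc i)
  -- the six incidence facts
  have f1 : ∀ i j, u j ∈ a i → j = i := by
    intro i j h
    by_contra hne'
    exact key1 i (u j) (huC j) (fun hh => hne' (uinj hh)) h
  have f2 : ∀ i j, w j ∈ a i → j = i := by
    intro i j h
    by_contra hne'
    rcases Nondegenerate.eq_or_eq h (hwa i) (hwM j) (hwM i) with h' | h'
    · exact hne' (hwinj h')
    · exact hMclean (u i) (huC i) (h' ▸ hua i)
  have f3 : ∀ i j, v j ∈ a i → False := fun i j h =>
    key1 i (v j) (hvC j) (fun hh => huv i j hh.symm) h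
  have f4 : ∀ i j, u j ∈ c i → False := fun i j h =>
    key2 i (u j) (huC j) (huv j i) h
  have f5 : ∀ i j, w j ∈ c i → j = i := by
    intro i j h
    by_contra hne'
    rcases Nondegenerate.eq_or_eq h (hwc i) (hwM j) (hwM i) with h' | h'
    · exact hne' (hwinj h')
    · exact hMclean (v i) (hvC i) (h' ▸ hvc i)
  have f6 : ∀ i j, v j ∈ c i → j = i := by
    intro i j h
    by_contra hne'
    exact key2 i (v j) (hvC j) (fun hh => hne' (vinj hh)) h
  -- line disequalities
  have hac : ∀ i j, a i ≠ c j := by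
    intro i j h
    exact f4 j i (h ▸ hua i)
  have haa : ∀ i j, a i = a j → i = j := fun i j h => f1 j i (h ▸ hua i)
  have hcc : ∀ i j, c i = c j → i = j := fun i j h => f6 j i (h ▸ hvc i)
  -- build F
  set F : Fin 5 → Fin k → P ⊕ L := mkF u a w c v with hF
  have hne : ∀ r s i j, F r i = F s j → r = s ∧ i = j := by
    intro r s i j h
    fin_cases r <;> fin_cases s <;>
      simp only [hF, mkF, Function.comp_apply, Sum.inl.injEq, Sum.inr.injEq,
        reduceCtorEq] at h ⊢
    · exact ⟨trivial, uinj h⟩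
    · exact absurd h (fun hh => hwu j i hh.symm)
    · exact absurd h (huv i j)
    · exact ⟨trivial, haa i j h⟩
    · exact absurd h (hac i j)
    · exact absurd h (hwu i j)
    · exact ⟨trivial, hwinj h⟩
    · exact absurd h (hwv i j)
    · exact absurd h (fun hh => hac j i hh.symm)
    · exact ⟨trivial, hcc i j h⟩
    · exact absurd h (fun hh => huv j i hh.symm)
    · exact absurd h (fun hh => hwv j i hh.symm)
    · exact ⟨trivial, vinj h⟩
  have hadj : ∀ x y, (bigGraph F (fun _ => 0)).Adj x y ↔
      ((incAbs P L).Adj x y ∧ (∃ r i, x = F r i) ∧ (∃ r i, y = F r i)) := by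
    intro x y
    constructor
    · rintro ⟨hxy, i, p, hp, hpr⟩
      have hp' : p = (0,1) ∨ p = (1,2) ∨ p = (2,3) ∨ p = (3,4) := by
        have heq : shapePairs ((fun _ : Fin k => 0) i) = [(0,1),(1,2),(2,3),(3,4)] := rfl
        rw [heq] at hp
        simpa using hp
      rcases hp' with rfl | rfl | rfl | rfl <;> rcases hpr with ⟨rfl, rfl⟩ | ⟨rfl, rfl⟩
      · exact ⟨Or.inl ⟨u i, a i, rfl, rfl, hua i⟩, ⟨0, i, rfl⟩, ⟨1, i, rfl⟩⟩
      · exact ⟨Or.inr ⟨u i, a i, rfl, rfl, hua i⟩, ⟨1, i, rfl⟩, ⟨0, i, rfl⟩⟩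
      · exact ⟨Or.inr ⟨w i, a i, rfl, rfl, hwa i⟩, ⟨1, i, rfl⟩, ⟨2, i, rfl⟩⟩
      · exact ⟨Or.inl ⟨w i, a i, rfl, rfl, hwa i⟩, ⟨2, i, rfl⟩, ⟨1, i, rfl⟩⟩
      · exact ⟨Or.inl ⟨w i, c i, rfl, rfl, hwc i⟩, ⟨2, i, rfl⟩, ⟨3, i, rfl⟩⟩
      · exact ⟨Or.inr ⟨w i, c i, rfl, rfl, hwc i⟩, ⟨3, i, rfl⟩, ⟨2, i, rfl⟩⟩
      · exact ⟨Or.inr ⟨v i, c i, rfl, rfl, hvc i⟩, ⟨3, i, rfl⟩, ⟨4, i, rfl⟩⟩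
      · exact ⟨Or.inl ⟨v i, c i, rfl, rfl, hvc i⟩, ⟨4, i, rfl⟩, ⟨3, i, rfl⟩⟩
    · rintro ⟨hadj', ⟨r, i, rfl⟩, ⟨s, j, rfl⟩⟩
      rcases hadj' with ⟨p, l, he1, he2, hm⟩ | ⟨p, l, he1, he2, hm⟩ <;>
        fin_cases r <;> fin_cases s <;>
        simp only [hF, mkF, Function.comp_apply, Sum.inl.injEq, Sum.inr.injEq,
          reduceCtorEq] at he1 he2
      -- first disjunct: x = inl p, y = inr l
      · -- (0,1) : u i ∈ a j
        subst he1; subst he2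
        obtain rfl := f1 j i hm
        exact ⟨by simp [hF, mkF], i, (0,1), by show _ ∈ shapePairs 0; decide, Or.inl ⟨rfl, rfl⟩⟩
      · -- (0,3) : u i ∈ c j
        subst he1; subst he2
        exact absurd hm (fun hh => f4 j i hh)
      · -- (2,1) : w i ∈ a j
        subst he1; subst he2
        obtain rfl := f2 j i hm
        exact ⟨by simp [hF, mkF], i, (1,2), by show _ ∈ shapePairs 0; decide, Or.inr ⟨rfl, rfl⟩⟩
      · -- (2,3) : w i ∈ c j
        subst he1; subst he2
        obtain rfl := f5 j i hm
        exact ⟨by simp [hF, mkF], i, (2,3), by show _ ∈ shapePairs 0; decide, Or.inl ⟨rfl, rfl⟩⟩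
      · -- (4,1) : v i ∈ a j
        subst he1; subst he2
        exact absurd hm (fun hh => f3 j i hh)
      · -- (4,3) : v i ∈ c j
        subst he1; subst he2
        obtain rfl := f6 j i hm
        exact ⟨by simp [hF, mkF], i, (3,4), by show _ ∈ shapePairs 0; decide, Or.inr ⟨rfl, rfl⟩⟩
      -- second disjunct: x = inr l, y = inl p
      · -- (1,0) : u j ∈ a i
        subst he1; subst he2
        obtain rfl := f1 i j hm
        exact ⟨by simp [hF, mkF], j, (0,1), by show _ ∈ shapePairs 0; decide, Or.inr ⟨rfl, rfl⟩⟩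
      · -- (1,2) : w j ∈ a i
        subst he1; subst he2
        obtain rfl := f2 i j hm
        exact ⟨by simp [hF, mkF], j, (1,2), by show _ ∈ shapePairs 0; decide, Or.inl ⟨rfl, rfl⟩⟩
      · -- (1,4) : v j ∈ a i
        subst he1; subst he2
        exact absurd hm (fun hh => f3 i j hh)
      · -- (3,0) : u j ∈ c i
        subst he1; subst he2
        exact absurd hm (fun hh => f4 i j hh)
      · -- (3,2) : w j ∈ c i
        subst he1; subst he2
        obtain rfl := f5 i j hm
        exact ⟨by simp [hF, mkF], j, (2,3), by show _ ∈ shapePairs 0; decide, Or.inr ⟨rfl, rfl⟩⟩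
      · -- (3,4) : v j ∈ c i
        subst he1; subst he2
        obtain rfl := f6 i j hm
        exact ⟨by simp [hF, mkF], j, (3,4), by show _ ∈ shapePairs 0; decide, Or.inl ⟨rfl, rfl⟩⟩
  have main := key_lemma (incAbs P L) F hne hadj
  have hF0 : F 0 = Sum.inl ∘ u := rfl
  have hF4 : F 4 = Sum.inl ∘ v := rfl
  rw [hF0, hF4] at main
  exact main

end partB

end VMAux
namespace VMAux

open Configuration

variable {F : Type*} [Field F]

lemma incAbs_eq : incAbs (ProjPoint F) (ProjLine F) = incGraph F := by
  ext x y
  rfl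

lemma graphMap_dual :
    graphMap ((Equiv.sumComm (Dual (ProjLine F)) (Dual (ProjPoint F))) :
        Dual (ProjLine F) ⊕ Dual (ProjPoint F) ≃ ProjPoint F ⊕ ProjLine F)
      (incAbs (Dual (ProjLine F)) (Dual (ProjPoint F))) = incGraph F := by
  ext x y
  rcases x with pt | ln <;> rcases y with pt' | ln'
  · show (incAbs _ _).Adj (Sum.inr pt) (Sum.inr pt') ↔ (incGraph F).Adj (Sum.inl pt) (Sum.inl pt')
    constructor
    · rintro (⟨p, l, h1, h2, -⟩ | ⟨p, l, h1, h2, -⟩) <;> simp_all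
    · rintro (⟨p, l, h1, h2, -⟩ | ⟨p, l, h1, h2, -⟩) <;> simp_all
  · show (incAbs _ _).Adj (Sum.inr pt) (Sum.inl ln') ↔ (incGraph F).Adj (Sum.inl pt) (Sum.inr ln')
    constructor
    · rintro (⟨p, l, h1, h2, hm⟩ | ⟨p, l, h1, h2, hm⟩)
      · exact absurd h1 (by simp)
      · obtain rfl : pt = l := by simpa using h1
        obtain rfl : ln' = p := by simpa using h2
        exact Or.inl ⟨pt, ln', rfl, rfl, hm⟩
    · rintro (⟨p, l, h1, h2, hm⟩ | ⟨p, l, h1, h2, hm⟩)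
      · obtain rfl : pt = p := Sum.inl.inj h1
        obtain rfl : ln' = l := Sum.inr.inj h2
        exact Or.inr ⟨ln', pt, rfl, rfl, hm⟩
      · exact absurd h1 (by simp)
  · show (incAbs _ _).Adj (Sum.inl ln) (Sum.inr pt') ↔ (incGraph F).Adj (Sum.inr ln) (Sum.inl pt')
    constructor
    · rintro (⟨p, l, h1, h2, hm⟩ | ⟨p, l, h1, h2, hm⟩)
      · obtain rfl : ln = p := by simpa using h1
        obtain rfl : pt' = l := by simpa using h2
        exact Or.inr ⟨pt', ln, rfl, rfl, hm⟩
      · exact absurd h1 (by simp)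
    · rintro (⟨p, l, h1, h2, hm⟩ | ⟨p, l, h1, h2, hm⟩)
      · exact absurd h1 (by simp)
      · obtain rfl : ln = l := Sum.inr.inj h1
        obtain rfl : pt' = p := Sum.inl.inj h2
        exact Or.inl ⟨ln, pt', rfl, rfl, hm⟩
  · show (incAbs _ _).Adj (Sum.inl ln) (Sum.inl ln') ↔ (incGraph F).Adj (Sum.inr ln) (Sum.inr ln')
    constructor
    · rintro (⟨p, l, h1, h2, -⟩ | ⟨p, l, h1, h2, -⟩) <;> simp_all
    · rintro (⟨p, l, h1, h2, -⟩ | ⟨p, l, h1, h2, -⟩) <;> simp_all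

end VMAux

theorem incGraph_two_side_pairable' (F : Type*) [Field F] [Fintype F] (k : ℕ)
    (hk : 5 * k ≤ Fintype.card F + 4) :
    (∀ u v : Fin k → ProjPoint F, Function.Injective (Sum.elim u v) →
      IsVertexMinor (pairingGraph (Sum.inl ∘ u) (Sum.inl ∘ v))
        (Set.range (Sum.inl ∘ u) ∪ Set.range (Sum.inl ∘ v)) (incGraph F) Set.univ) ∧
    (∀ u v : Fin k → ProjLine F, Function.Injective (Sum.elim u v) →
      IsVertexMinor (pairingGraph (Sum.inr ∘ u) (Sum.inr ∘ v))
        (Set.range (Sum.inr ∘ u) ∪ Set.range (Sum.inr ∘ v)) (incGraph F) Set.univ) := by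
  open VMAux Configuration in
  constructor
  · intro u v hinj
    have h := VMAux.partB (P := ProjPoint F) (L := ProjLine F)
      (by rw [order_PL_eq]; exact hk) u v hinj
    rwa [incAbs_eq] at h
  · intro u v hinj
    have horder : Configuration.ProjectivePlane.order (Dual (ProjLine F)) (Dual (ProjPoint F)) =
        Fintype.card F := by
      rw [Configuration.ProjectivePlane.Dual.order, order_PL_eq]
    have h := VMAux.partB (P := Dual (ProjLine F)) (L := Dual (ProjPoint F))
      (by rw [horder]; exact hk) (u : Fin k → Dual (ProjLine F)) (v : Fin k → Dual (ProjLine F))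
      hinj
    have h2 := VMAux.ivm_map ((Equiv.sumComm (Dual (ProjLine F)) (Dual (ProjPoint F))) :
      Dual (ProjLine F) ⊕ Dual (ProjPoint F) ≃ ProjPoint F ⊕ ProjLine F) h
    rw [VMAux.graphMap_dual, VMAux.graphMap_pairingGraph, Set.image_univ,
      Equiv.range_eq_univ, Set.image_union, ← Set.range_comp, ← Set.range_comp] at h2
    have e1 : ((Equiv.sumComm (Dual (ProjLine F)) (Dual (ProjPoint F))) :
        Dual (ProjLine F) ⊕ Dual (ProjPoint F) ≃ ProjPoint F ⊕ ProjLine F) ∘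
        (Sum.inl ∘ (u : Fin k → Dual (ProjLine F))) = Sum.inr ∘ u := rfl
    have e2 : ((Equiv.sumComm (Dual (ProjLine F)) (Dual (ProjPoint F))) :
        Dual (ProjLine F) ⊕ Dual (ProjPoint F) ≃ ProjPoint F ⊕ ProjLine F) ∘
        (Sum.inl ∘ (v : Fin k → Dual (ProjLine F))) = Sum.inr ∘ v := rfl
    rw [e1, e2] at h2
    exact h2

/-- The incidence graph of PG(2,q) is two-side `k`-pairable whenever `5k ≤ q + 4`. -/
theorem incGraph_two_side_pairable (F : Type*) [Field F] [Fintype F] (k : ℕ)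
    (hk : 5 * k ≤ Fintype.card F + 4) :
    (∀ u v : Fin k → ProjPoint F, Function.Injective (Sum.elim u v) →
      IsVertexMinor (pairingGraph (Sum.inl ∘ u) (Sum.inl ∘ v))
        (Set.range (Sum.inl ∘ u) ∪ Set.range (Sum.inl ∘ v)) (incGraph F) Set.univ) ∧
    (∀ u v : Fin k → ProjLine F, Function.Injective (Sum.elim u v) →
      IsVertexMinor (pairingGraph (Sum.inr ∘ u) (Sum.inr ∘ v))
        (Set.range (Sum.inr ∘ u) ∪ Set.range (Sum.inr ∘ v)) (incGraph F) Set.univ) := by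
  exact incGraph_two_side_pairable' F k hk
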